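/- With notation as in the splitting f = f⁺(z)z + a₀ + w f⁻(w) of a bounded holomorphic function on the conservative hyperbola H_r (r > 1), the parts without the constant term satisfy ‖f⁺‖_𝔻 ≤ (2r²−1)/(r²−1) · ‖f‖_{H_r} and ‖f⁻‖_𝔻 ≤ (2r²−1)/(r²−1) · ‖f‖_{H_r}. -/

import Mathlib

open Complex Filter Real Set MeasureTheory intervalIntegral
open scoped Topology ENNReal NNReal

lemma exp_int_integral (n : ℤ) (hn : n ≠ 0) :
    (∫ θ : ℝ in (0:ℝ)..(2*π), Complex.exp (n * θ * I)) = 0 := by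
  have hc : (n : ℂ) * I ≠ 0 := by simp [hn, Complex.I_ne_zero]
  have h := integral_exp_mul_complex (a := 0) (b := 2*π) hc
  have h2 : (∫ θ : ℝ in (0:ℝ)..(2*π), Complex.exp (n * θ * I))
      = ∫ θ : ℝ in (0:ℝ)..(2*π), Complex.exp ((n:ℂ) * I * θ) := by
    apply intervalIntegral.integral_congr
    intro x _; ring_nf
  have h3 : Complex.exp ((n:ℂ) * I * ((2*π:ℝ):ℂ)) = 1 := by
    push_cast
    rw [show (n:ℂ) * I * (2*π) = n * (2 * π * I) by ring]
    exact Complex.exp_int_mul_two_pi_mul_I n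
  rw [h2, h, h3]
  simp

lemma norm_coe_pos {t : ℝ} (ht : 0 < t) : ‖((t:ℝ):ℂ)‖ = t := by
  simp [Complex.norm_real, abs_of_pos ht]

lemma summable_norm_zpow {r : ℝ} (hr : 1 < r) {c : ℤ → ℂ} {F : ℂ → ℂ}
    (hsum : ∀ ζ : ℂ, 1 / r < ‖ζ‖ → ‖ζ‖ < r → HasSum (fun k : ℤ => c k * ζ ^ k) (F ζ))
    {ρ : ℝ} (h1 : 1 / r < ρ) (h2 : ρ < r) :
    Summable (fun m : ℤ => ‖c m‖ * ρ ^ m) := by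
  have hr0 : (0:ℝ) < r := lt_trans one_pos hr
  have hρ0 : (0:ℝ) < ρ := lt_trans (by positivity) h1
  set ρ₁ : ℝ := (1/r + ρ)/2 with hρ₁def
  set ρ₂ : ℝ := (ρ + r)/2 with hρ₂def
  have hρ₁a : 1/r < ρ₁ := by rw [hρ₁def]; linarith
  have hρ₁b : ρ₁ < ρ := by rw [hρ₁def]; linarith
  have hρ₂a : ρ < ρ₂ := by rw [hρ₂def]; linarith
  have hρ₂b : ρ₂ < r := by rw [hρ₂def]; linarith
  clear_value ρ₁ ρ₂
  have hρ₁0 : (0:ℝ) < ρ₁ := lt_trans (by positivity) hρ₁a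
  have hρ₂0 : (0:ℝ) < ρ₂ := lt_trans hρ0 hρ₂a
  -- summability of norms at ρ₁ and ρ₂
  have key : ∀ t : ℝ, 1/r < t → t < r → Summable (fun m : ℤ => ‖c m‖ * t ^ m) := by
    intro t ht1 ht2
    have ht0 : (0:ℝ) < t := lt_trans (by positivity) ht1
    have hnt : ‖((t:ℝ):ℂ)‖ = t := norm_coe_pos ht0
    have := ((hsum (t:ℂ) (by rw [hnt]; exact ht1) (by rw [hnt]; exact ht2)).summable).norm
    convert this using 2 with m
    rw [norm_mul, norm_zpow, hnt]
  have S1 := key ρ₁ hρ₁a (lt_trans hρ₁b (lt_trans hρ₂a hρ₂b))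
  have S2 := key ρ₂ (lt_trans h1 hρ₂a) hρ₂b
  have b1 : ∀ m : ℤ, ‖c m‖ * ρ₁ ^ m ≤ ∑' m : ℤ, ‖c m‖ * ρ₁ ^ m := fun m =>
    S1.le_tsum m (fun j _ => by positivity)
  have b2 : ∀ m : ℤ, ‖c m‖ * ρ₂ ^ m ≤ ∑' m : ℤ, ‖c m‖ * ρ₂ ^ m := fun m =>
    S2.le_tsum m (fun j _ => by positivity)
  set C1 := ∑' m : ℤ, ‖c m‖ * ρ₁ ^ m
  set C2 := ∑' m : ℤ, ‖c m‖ * ρ₂ ^ m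
  apply Summable.of_nat_of_neg
  · refine Summable.of_nonneg_of_le (fun n => by positivity) (fun n => ?_)
      (((summable_geometric_of_lt_one (by positivity)
        ((div_lt_one hρ₂0).mpr hρ₂a)).mul_left C2))
    · 
      have : ρ ^ (n:ℤ) = ρ₂ ^ (n:ℤ) * (ρ/ρ₂)^n := by
        rw [zpow_natCast, zpow_natCast, div_pow]
        field_simp
      rw [this, ← mul_assoc]
      exact mul_le_mul_of_nonneg_right (b2 n) (by positivity)
  · refine Summable.of_nonneg_of_le (fun n => by positivity) (fun n => ?_)
      ((summable_geometric_of_lt_one (by positivity)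
        ((div_lt_one hρ0).mpr hρ₁b)).mul_left C1)
    · 
      have : ρ ^ (-(n:ℤ)) = ρ₁ ^ (-(n:ℤ)) * (ρ₁/ρ)^n := by
        rw [zpow_neg, zpow_neg, zpow_natCast, zpow_natCast, div_pow]
        field_simp
      rw [this, ← mul_assoc]
      exact mul_le_mul_of_nonneg_right (b1 (-n)) (by positivity)

lemma coeff_circle {r M : ℝ} (hr : 1 < r) {c : ℤ → ℂ} {F : ℂ → ℂ}
    (hsum : ∀ ζ : ℂ, 1 / r < ‖ζ‖ → ‖ζ‖ < r → HasSum (fun k : ℤ => c k * ζ ^ k) (F ζ))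
    (hM : ∀ ζ : ℂ, 1 / r < ‖ζ‖ → ‖ζ‖ < r → ‖F ζ‖ ≤ M)
    (k : ℤ) {ρ : ℝ} (h1 : 1 / r < ρ) (h2 : ρ < r) :
    ‖c k‖ * ρ ^ k ≤ M := by
  have hr0 : (0:ℝ) < r := lt_trans one_pos hr
  have hρ0 : (0:ℝ) < ρ := lt_trans (by positivity) h1
  have hnρ : ∀ θ : ℝ, ‖(ρ:ℂ) * Complex.exp (θ * I)‖ = ρ := by
    intro θ
    rw [norm_mul, norm_coe_pos hρ0, Complex.norm_exp_ofReal_mul_I, mul_one]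
  have hexpnorm : ∀ (θ : ℝ), ‖Complex.exp (-(k:ℂ) * θ * I)‖ = 1 := by
    intro θ
    rw [show (-(k:ℂ) * θ * I) = (((-k) * θ : ℝ) : ℂ) * I by push_cast; ring]
    exact Complex.norm_exp_ofReal_mul_I _
  have key : HasSum
      (fun m : ℤ => ∫ θ : ℝ in (0:ℝ)..(2*π),
        c m * ((ρ:ℂ) * Complex.exp (θ * I)) ^ m * Complex.exp (-k * θ * I))
      (∫ θ : ℝ in (0:ℝ)..(2*π),
        F ((ρ:ℂ) * Complex.exp (θ * I)) * Complex.exp (-k * θ * I)) := by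
    apply intervalIntegral.hasSum_integral_of_dominated_convergence
      (bound := fun m _ => ‖c m‖ * ρ ^ m)
    · intro m
      apply Continuous.aestronglyMeasurable
      have h0 : ∀ θ : ℝ, (ρ:ℂ) * Complex.exp (θ * I) ≠ 0 := by
        intro θ
        exact mul_ne_zero (by simpa using hρ0.ne') (Complex.exp_ne_zero _)
      have hc1 : Continuous fun θ : ℝ => (ρ:ℂ) * Complex.exp (θ * I) := by fun_prop
      have hc2 : Continuous fun θ : ℝ => ((ρ:ℂ) * Complex.exp (θ * I)) ^ m :=
        hc1.zpow₀ m (fun θ => Or.inl (h0 θ))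
      have hc3 : Continuous fun θ : ℝ => Complex.exp (-(k:ℂ) * θ * I) := by fun_prop
      exact (continuous_const.mul hc2).mul hc3
    · intro m
      filter_upwards with θ _
      rw [norm_mul, norm_mul, norm_zpow, hnρ, hexpnorm θ, mul_one]
    · filter_upwards with θ _
      exact summable_norm_zpow hr hsum h1 h2
    · exact intervalIntegrable_const
    · filter_upwards with θ _
      exact (hsum _ (by rw [hnρ]; exact h1) (by rw [hnρ]; exact h2)).mul_right _
  have int_eq : ∀ m : ℤ,
      (∫ θ : ℝ in (0:ℝ)..(2*π),
        c m * ((ρ:ℂ) * Complex.exp (θ * I)) ^ m * Complex.exp (-k * θ * I))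
      = if m = k then (2*π : ℝ) * (c k * (ρ:ℂ) ^ k) else 0 := by
    intro m
    have hint : ∀ θ : ℝ,
        c m * ((ρ:ℂ) * Complex.exp (θ * I)) ^ m * Complex.exp (-k * θ * I)
        = c m * (ρ:ℂ) ^ m * Complex.exp ((m - k) * θ * I) := by
      intro θ
      rw [mul_zpow, ← Complex.exp_int_mul]
      rw [mul_assoc (c m), mul_assoc, ← Complex.exp_add]
      ring_nf
    simp_rw [hint]
    rw [intervalIntegral.integral_const_mul]
    by_cases hmk : m = k
    · subst hmk
      rw [if_pos rfl]
      simp only [sub_self, zero_mul, Complex.exp_zero]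
      rw [intervalIntegral.integral_const, Complex.real_smul]
      push_cast
      ring
    · rw [if_neg hmk]
      have := exp_int_integral (m - k) (sub_ne_zero.mpr hmk)
      rw [show (fun θ : ℝ => Complex.exp (((m - k : ℤ):ℂ) * θ * I))
          = fun θ : ℝ => Complex.exp (((m:ℂ) - k) * θ * I) by push_cast; rfl] at this
      rw [this, mul_zero]
  have huniq : ((2*π : ℝ) : ℂ) * (c k * (ρ:ℂ) ^ k)
      = ∫ θ : ℝ in (0:ℝ)..(2*π), F ((ρ:ℂ) * Complex.exp (θ * I)) * Complex.exp (-k * θ * I) := by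
    have h1' : HasSum (fun m : ℤ => if m = k then ((2*π : ℝ) : ℂ) * (c k * (ρ:ℂ) ^ k) else 0)
        (∫ θ : ℝ in (0:ℝ)..(2*π), F ((ρ:ℂ) * Complex.exp (θ * I)) * Complex.exp (-k * θ * I)) := by
      convert key using 2 with m
      rw [int_eq m]
    have h2' := hasSum_ite_eq k (((2*π : ℝ) : ℂ) * (c k * (ρ:ℂ) ^ k))
    exact h2'.unique h1'
  have hbound : ‖∫ θ : ℝ in (0:ℝ)..(2*π),
      F ((ρ:ℂ) * Complex.exp (θ * I)) * Complex.exp (-k * θ * I)‖ ≤ M * |2*π - 0| := by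
    apply intervalIntegral.norm_integral_le_of_norm_le_const
    intro θ _
    rw [norm_mul, hexpnorm θ, mul_one]
    exact hM _ (by rw [hnρ]; exact h1) (by rw [hnρ]; exact h2)
  rw [← huniq] at hbound
  have hnorm : ‖((2*π : ℝ) : ℂ) * (c k * (ρ:ℂ) ^ k)‖ = (2*π) * (‖c k‖ * ρ ^ k) := by
    rw [norm_mul, norm_mul, norm_zpow, norm_coe_pos hρ0, norm_coe_pos (by positivity)]
  rw [hnorm, sub_zero, abs_of_pos (by positivity : (0:ℝ) < 2*π)] at hbound
  have hπ : (0:ℝ) < 2*π := by positivity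
  nlinarith [hbound]

lemma coeff_r {r M : ℝ} (hr : 1 < r) {c : ℤ → ℂ} {F : ℂ → ℂ}
    (hsum : ∀ ζ : ℂ, 1 / r < ‖ζ‖ → ‖ζ‖ < r → HasSum (fun k : ℤ => c k * ζ ^ k) (F ζ))
    (hM : ∀ ζ : ℂ, 1 / r < ‖ζ‖ → ‖ζ‖ < r → ‖F ζ‖ ≤ M)
    (m : ℕ) : ‖c m‖ * r ^ m ≤ M ∧ ‖c (-(m:ℤ))‖ * r ^ m ≤ M := by
  have hr0 : (0:ℝ) < r := lt_trans one_pos hr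
  have hinv : 1/r < r := by
    rw [div_lt_iff₀ hr0]; nlinarith
  constructor
  · have hev : ∀ᶠ ρ in 𝓝[<] r, ‖c m‖ * ρ ^ m ≤ M := by
      filter_upwards [Ioo_mem_nhdsLT hinv]
        with ρ hρ
      have := coeff_circle hr hsum hM (m:ℤ) hρ.1 hρ.2
      rwa [zpow_natCast] at this
    have htend : Filter.Tendsto (fun ρ : ℝ => ‖c m‖ * ρ ^ m) (𝓝[<] r) (𝓝 (‖c m‖ * r ^ m)) :=
      ((continuous_const.mul (continuous_pow m)).tendsto r).mono_left nhdsWithin_le_nhds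
    exact le_of_tendsto htend hev
  · have hev : ∀ᶠ ρ in 𝓝[>] (1/r), ‖c (-(m:ℤ))‖ * ρ ^ (-(m:ℤ)) ≤ M := by
      filter_upwards [Ioo_mem_nhdsGT hinv]
        with ρ hρ
      exact coeff_circle hr hsum hM (-(m:ℤ)) hρ.1 hρ.2
    have h1r0 : (1/r : ℝ) ≠ 0 := by positivity
    have htend : Filter.Tendsto (fun ρ : ℝ => ‖c (-(m:ℤ))‖ * ρ ^ (-(m:ℤ))) (𝓝[>] (1/r))
        (𝓝 (‖c (-(m:ℤ))‖ * (1/r) ^ (-(m:ℤ)))) :=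
      (tendsto_const_nhds.mul ((continuousAt_zpow₀ _ _ (Or.inl h1r0)).tendsto)).mono_left
        nhdsWithin_le_nhds
    have := le_of_tendsto htend hev
    rwa [show ((1/r : ℝ)) ^ (-(m:ℤ)) = r ^ m by
      rw [zpow_neg, one_div, inv_zpow, inv_inv, zpow_natCast]] at this

lemma fplus_bound {r M : ℝ} (hr : 1 < r) {c : ℤ → ℂ} {F : ℂ → ℂ}
    (hsum : ∀ ζ : ℂ, 1 / r < ‖ζ‖ → ‖ζ‖ < r → HasSum (fun k : ℤ => c k * ζ ^ k) (F ζ))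
    (hM : ∀ ζ : ℂ, 1 / r < ‖ζ‖ → ‖ζ‖ < r → ‖F ζ‖ ≤ M) :
    ∀ z : ℂ, ‖z‖ < 1 →
      ‖∑' k : ℕ, c (k + 1) * (r : ℂ) ^ (k + 1) * z ^ k‖
        ≤ (2 * r ^ 2 - 1) / (r ^ 2 - 1) * M := by
  have hr0 : (0:ℝ) < r := lt_trans one_pos hr
  have hinv1 : (1:ℝ)/r < 1 := by rw [div_lt_one hr0]; exact hr
  have hM0 : 0 ≤ M := le_trans (norm_nonneg (F 1)) (hM 1 (by simpa using hinv1) (by simpa using hr))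
  have cb := coeff_r hr hsum hM
  have hrpow : ∀ n : ℕ, ‖(r:ℂ) ^ n‖ = r ^ n := by
    intro n; rw [norm_pow, norm_coe_pos hr0]
  -- the power series
  set a : ℕ → ℂ := fun n => c (n+1) * (r:ℂ)^(n+1) with ha_def
  have ha : ∀ n, ‖a n‖ ≤ M := by
    intro n
    rw [ha_def]
    simp only []
    rw [norm_mul, hrpow]
    have := (cb (n+1)).1
    rwa [show (((n+1:ℕ)):ℤ) = ((n:ℤ) + 1) by push_cast; ring] at this
  set p : FormalMultilinearSeries ℂ ℂ ℂ := FormalMultilinearSeries.ofScalars ℂ a with hp_def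
  have hrad : (1 : ℝ≥0∞) ≤ p.radius := by
    have := p.le_radius_of_bound M (r := 1) (fun n => by
      rw [hp_def, FormalMultilinearSeries.ofScalars_norm]
      simpa using ha n)
    simpa using this
  have hsum_eq : ∀ y : ℂ, p.sum y = ∑' k : ℕ, c (k + 1) * (r : ℂ) ^ (k + 1) * y ^ k := by
    intro y
    rw [FormalMultilinearSeries.sum]
    apply tsum_congr
    intro n
    rw [hp_def, FormalMultilinearSeries.ofScalars_apply_eq]
    rw [smul_eq_mul]
  have hdiff : DifferentiableOn ℂ p.sum (EMetric.ball (0:ℂ) p.radius) :=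
    (p.hasFPowerSeriesOnBall (lt_of_lt_of_le zero_lt_one hrad)).differentiableOn
  intro z hz
  rw [← hsum_eq]
  -- main estimate on circles of radius t
  have main : ∀ t : ℝ, max ‖z‖ (1/r) < t → t < 1 →
      ‖p.sum z‖ ≤ (2*M + M/(r^2*t-1))/t := by
    intro t ht1 ht2
    have htz : ‖z‖ < t := lt_of_le_of_lt (le_max_left _ _) ht1
    have htr : 1/r < t := lt_of_le_of_lt (le_max_right _ _) ht1
    have ht0 : (0:ℝ) < t := lt_trans (by positivity) htr
    have hrt1 : (1:ℝ) < r * t := by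
      rw [div_lt_iff₀ hr0] at htr; linarith [htr]
    have hr2t : (1:ℝ) < r^2*t := by nlinarith
    -- frontier bound
    have hfront : ∀ y ∈ frontier (Metric.ball (0:ℂ) t), ‖p.sum y‖ ≤ (2*M + M/(r^2*t-1))/t := by
      intro y hy
      rw [frontier_ball (0:ℂ) ht0.ne'] at hy
      have hyt : ‖y‖ = t := by simpa using hy
      set ζ : ℂ := (r:ℂ) * y with hζ_def
      have hζn : ‖ζ‖ = r * t := by rw [hζ_def, norm_mul, norm_coe_pos hr0, hyt]
      have hζ1 : 1/r < ‖ζ‖ := by rw [hζn]; linarith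
      have hζ2 : ‖ζ‖ < r := by rw [hζn]; nlinarith
      -- positive part
      have hsA : Summable (fun n : ℕ => c n * ζ ^ (n:ℤ)) := by
        apply Summable.of_norm
        apply Summable.of_nonneg_of_le (fun n => norm_nonneg _) (fun n => ?_)
          ((summable_geometric_of_lt_one ht0.le ht2).mul_left M)
        rw [norm_mul, norm_zpow, hζn]
        calc ‖c n‖ * (r*t)^(n:ℤ) = (‖c n‖ * r^n) * t^n := by
              rw [zpow_natCast, mul_pow]; ring
          _ ≤ M * t^n := mul_le_mul_of_nonneg_right (cb n).1 (by positivity)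
      -- negative part
      have hq1 : (r^2*t)⁻¹ < 1 := by
        rw [inv_lt_one_iff₀]; right; exact hr2t
      have hq0 : (0:ℝ) ≤ (r^2*t)⁻¹ := by positivity
      have hBest : ∀ n : ℕ, ‖c (-((n:ℤ) + 1)) * ζ ^ (-((n:ℤ) + 1))‖ ≤ M * ((r^2*t)⁻¹)^(n+1) := by
        intro n
        rw [norm_mul, norm_zpow, hζn]
        have h1 : ‖c (-((n:ℤ)+1))‖ * r^(n+1) ≤ M := by
          have := (cb (n+1)).2
          rwa [show (-((n+1:ℕ):ℤ)) = -((n:ℤ)+1) by push_cast; ring] at this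
        have h2 : (r*t) ^ (-((n:ℤ)+1)) = ((r*t)^(n+1))⁻¹ := by
          rw [show (-((n:ℤ)+1)) = -(((n+1:ℕ)):ℤ) by push_cast; ring, zpow_neg, zpow_natCast]
        have h3 : M * ((r^2*t)⁻¹)^(n+1) = (M / r^(n+1)) * ((r*t)^(n+1))⁻¹ := by
          have e : (r^2*t)^(n+1) = r^(n+1) * ((r*t)^(n+1)) := by
            rw [← mul_pow]; ring_nf
          rw [inv_pow, e, mul_inv, div_eq_mul_inv]
          ring
        rw [h2, h3]
        exact mul_le_mul_of_nonneg_right ((le_div_iff₀ (by positivity)).mpr h1) (by positivity)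
      set q : ℝ := (r^2*t)⁻¹ with hq_def
      have hfun : (fun n:ℕ => M * q^(n+1)) = fun n:ℕ => (M*q)*q^n := by
        funext n; rw [pow_succ]; ring
      have hgeosum : Summable (fun n:ℕ => M * q^(n+1)) := by
        rw [hfun]; exact (summable_geometric_of_lt_one hq0 hq1).mul_left (M*q)
      have hsBnorm : Summable (fun n : ℕ => ‖c (-((n:ℤ)+1)) * ζ ^ (-((n:ℤ) + 1))‖) :=
        Summable.of_nonneg_of_le (fun n => norm_nonneg _) hBest hgeosum
      have hsB : Summable (fun n : ℕ => c (-((n:ℤ)+1)) * ζ ^ (-((n:ℤ) + 1))) :=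
        hsBnorm.of_norm
      set sA : ℂ := ∑' n : ℕ, c n * ζ ^ (n:ℤ) with hsA_def
      set sB : ℂ := ∑' n : ℕ, c (-((n:ℤ)+1)) * ζ ^ (-((n:ℤ) + 1)) with hsB_def
      have hsplit : HasSum (fun k : ℤ => c k * ζ ^ k) (sA + sB) :=
        HasSum.of_nat_of_neg_add_one hsA.hasSum hsB.hasSum
      have hFeq : F ζ = sA + sB := (hsum ζ hζ1 hζ2).unique hsplit
      -- ‖sB‖ bound
      have hsBle : ‖sB‖ ≤ M/(r^2*t-1) := by
        have h1 : ‖sB‖ ≤ ∑' n : ℕ, M * q^(n+1) :=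
          le_trans (norm_tsum_le_tsum_norm hsBnorm) (hsBnorm.tsum_le_tsum hBest hgeosum)
        have h2 : ∑' n : ℕ, M * q^(n+1) = (M*q)*(1-q)⁻¹ := by
          rw [hfun, tsum_mul_left, tsum_geometric_of_lt_one hq0 hq1]
        have h3 : (M*q)*(1-q)⁻¹ = M/(r^2*t-1) := by
          rw [hq_def]
          have h4 : (1 - (r^2*t)⁻¹) ≠ 0 := by
            have : (0:ℝ) < 1 - (r^2*t)⁻¹ := by rw [sub_pos]; exact hq1
            exact this.ne'
          have h5 : r^2*t - 1 ≠ 0 := by nlinarith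
          have hne : (r^2*t) ≠ 0 := by positivity
          field_simp
        rw [h2, h3] at h1
        exact h1
      -- relate p.sum y to sA
      have hc0 : ‖c 0‖ ≤ M := by
        have := (cb 0).1
        simpa using this
      have hps : p.sum y * y = ∑' n:ℕ, c ((n:ℤ)+1) * ζ^((n:ℤ)+1) := by
        rw [hsum_eq, ← tsum_mul_right]
        apply tsum_congr; intro k
        rw [show ((k:ℤ)+1) = ((k+1:ℕ):ℤ) by push_cast; ring, zpow_natCast, hζ_def, mul_pow,
          pow_succ]
        ring
      have hzero : sA = c 0 + ∑' n:ℕ, c ((n:ℤ)+1) * ζ^((n:ℤ)+1) := by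
        rw [hsA_def, hsA.tsum_eq_zero_add]
        have e1 : c ((0:ℕ):ℤ) * ζ^((0:ℕ):ℤ) = c 0 := by simp
        rw [e1]
        congr 1
      have hkey : p.sum y * y = F ζ - sB - c 0 := by
        rw [hFeq, hps]
        rw [hzero]
        ring
      have hnorm1 : ‖p.sum y‖ * t = ‖p.sum y * y‖ := by
        rw [norm_mul, hyt]
      have hnorm2 : ‖p.sum y * y‖ ≤ 2*M + M/(r^2*t-1) := by
        rw [hkey]
        calc ‖F ζ - sB - c 0‖ ≤ ‖F ζ - sB‖ + ‖c 0‖ := norm_sub_le _ _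
          _ ≤ ‖F ζ‖ + ‖sB‖ + ‖c 0‖ := by
              have := norm_sub_le (F ζ) sB
              linarith [this]
          _ ≤ M + M/(r^2*t-1) + M := by
              have := hM ζ hζ1 hζ2
              linarith [hsBle, hc0]
          _ = 2*M + M/(r^2*t-1) := by ring
      rw [le_div_iff₀ ht0]
      rw [hnorm1] at *
      exact hnorm2
    -- maximum modulus
    have hz_cl : z ∈ closure (Metric.ball (0:ℂ) t) := by
      rw [closure_ball (0:ℂ) ht0.ne']
      exact Metric.mem_closedBall.mpr (by simpa using htz.le)
    have hsub : Metric.closedBall (0:ℂ) t ⊆ EMetric.ball (0:ℂ) p.radius := by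
      intro x hx
      rw [Metric.mem_closedBall, dist_zero_right] at hx
      show edist x (0:ℂ) < p.radius
      rw [edist_zero_right]
      calc (‖x‖₊ : ℝ≥0∞) < 1 := by
            rw [← ENNReal.coe_one, ENNReal.coe_lt_coe, ← NNReal.coe_lt_coe]
            simpa using lt_of_le_of_lt hx ht2
        _ ≤ p.radius := hrad
    have hdOn : DiffContOnCl ℂ p.sum (Metric.ball 0 t) := by
      apply DifferentiableOn.diffContOnCl
      rw [closure_ball (0:ℂ) ht0.ne']
      exact hdiff.mono hsub
    exact Complex.norm_le_of_forall_mem_frontier_norm_le Metric.isBounded_ball hdOn hfront hz_cl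
  -- take the limit t → 1⁻
  have hmax1 : max ‖z‖ (1/r) < 1 := max_lt hz hinv1
  have hr21 : (0:ℝ) < r^2 - 1 := by nlinarith
  have htend : Filter.Tendsto (fun t : ℝ => (2*M + M/(r^2*t-1))/t) (𝓝[<] (1:ℝ))
      (𝓝 ((2*M + M/(r^2*1-1))/1)) := by
    apply Filter.Tendsto.mono_left _ nhdsWithin_le_nhds
    apply ContinuousAt.tendsto
    apply ContinuousAt.div _ continuousAt_id one_ne_zero
    apply continuousAt_const.add
    apply ContinuousAt.div continuousAt_const (by fun_prop)
    nlinarith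
  have hle : ∀ᶠ t in 𝓝[<] (1:ℝ), ‖p.sum z‖ ≤ (2*M + M/(r^2*t-1))/t := by
    filter_upwards [Ioo_mem_nhdsLT hmax1] with t ht
    exact main t ht.1 ht.2
  have hfinal := ge_of_tendsto htend hle
  have : (2*M + M/(r^2*1-1))/1 = (2 * r ^ 2 - 1) / (r ^ 2 - 1) * M := by
    rw [div_one, mul_one]
    field_simp
    ring
  rw [this] at hfinal
  exact hfinal

theorem stmt4 (r M : ℝ) (hr : 1 < r) (c : ℤ → ℂ) (F : ℂ → ℂ)
    (hsum : ∀ ζ : ℂ, 1 / r < ‖ζ‖ → ‖ζ‖ < r →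
      HasSum (fun k : ℤ => c k * ζ ^ k) (F ζ))
    (hM : ∀ ζ : ℂ, 1 / r < ‖ζ‖ → ‖ζ‖ < r → ‖F ζ‖ ≤ M) :
    (∀ z : ℂ, ‖z‖ < 1 →
      ‖∑' k : ℕ, c (k + 1) * (r : ℂ) ^ (k + 1) * z ^ k‖
        ≤ (2 * r ^ 2 - 1) / (r ^ 2 - 1) * M) ∧
    (∀ w : ℂ, ‖w‖ < 1 →
      ‖∑' k : ℕ, c (-(k + 1 : ℕ)) * (r : ℂ) ^ (k + 1) * w ^ k‖
        ≤ (2 * r ^ 2 - 1) / (r ^ 2 - 1) * M) := by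
  have hr0 : (0:ℝ) < r := lt_trans one_pos hr
  have hbnds : ∀ ζ : ℂ, 1 / r < ‖ζ‖ → ‖ζ‖ < r → (1 / r < ‖ζ⁻¹‖ ∧ ‖ζ⁻¹‖ < r) := by
    intro ζ h1 h2
    have hζpos : 0 < ‖ζ‖ := lt_trans (by positivity) h1
    constructor
    · rw [norm_inv, one_div, inv_lt_inv₀ (by positivity) hζpos]
      exact h2
    · rw [norm_inv]
      rw [one_div] at h1
      rw [inv_lt_comm₀ hζpos hr0]
      exact h1
  constructor
  · exact fplus_bound hr hsum hM
  · have hsum' : ∀ ζ : ℂ, 1 / r < ‖ζ‖ → ‖ζ‖ < r →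
        HasSum (fun k : ℤ => c (-k) * ζ ^ k) (F ζ⁻¹) := by
      intro ζ h1 h2
      obtain ⟨hb1, hb2⟩ := hbnds ζ h1 h2
      have h := hsum ζ⁻¹ hb1 hb2
      have h2' := (Equiv.neg ℤ).hasSum_iff.mpr h
      simp only [Function.comp_def, Equiv.neg_apply] at h2'
      have he : ∀ k : ℤ, (ζ⁻¹:ℂ)^(-k) = ζ^k := fun k => by
        rw [zpow_neg, inv_zpow, inv_inv]
      simp only [he] at h2'
      exact h2'
    have hM' : ∀ ζ : ℂ, 1 / r < ‖ζ‖ → ‖ζ‖ < r → ‖F ζ⁻¹‖ ≤ M := by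
      intro ζ h1 h2
      obtain ⟨hb1, hb2⟩ := hbnds ζ h1 h2
      exact hM ζ⁻¹ hb1 hb2
    intro w hw
    have h2 := fplus_bound (c := fun k => c (-k)) (F := fun ζ => F ζ⁻¹) hr hsum' hM' w hw
    have e : (∑' k : ℕ, c (-(k + 1 : ℕ)) * (r:ℂ)^(k+1) * w^k)
        = ∑' k : ℕ, c (-((k:ℤ) + 1)) * (r:ℂ)^(k+1) * w^k := by
      apply tsum_congr; intro k
      norm_cast
    rw [e]
    exact h2
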